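/- For every vertex v ∈ V, the sum of the frequencies f({v,u}) over the i−1 edges {v,u} incident to v equals (i−1)². In particular the average frequency of the edges incident to a vertex is i−1. -/

import Mathlib

open Finset

/-- The length of a path, given as a list of vertices, with respect to the
distance function `d`: the sum of `d` over consecutive entries. -/
def pathLen {V : Type*} (d : V → V → ℝ) (P : List V) : ℝ :=
  ((P.zip P.tail).map fun p => d p.1 p.2).sum

/-- A path (list of vertices) contains the edge `{x, y}` iff `x` and `y`
occur consecutively in it (in either order). -/
def ContainsEdge {V : Type*} (P : List V) (x y : V) : Prop :=
  [x, y] <:+: P ∨ [y, x] <:+: P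

/-- A Hamiltonian path of the whole (finite) vertex type `V` from `u` to `v`:
a duplicate-free list of all vertices starting at `u` and ending at `v`. -/
def IsHamPath {V : Type*} (P : List V) (u v : V) : Prop :=
  P.Nodup ∧ (∀ x : V, x ∈ P) ∧ P.head? = some u ∧ P.getLast? = some v

/-- The frequency of the (unordered) edge `e`: the number of unordered pairs
`{u, v}` of distinct vertices whose optimal path `OP u v` contains `e`. -/
noncomputable def freq {V : Type*} (OP : V → V → List V) (e : Sym2 V) : ℕ :=
  Nat.card {p : Sym2 V // ¬ p.IsDiag ∧
    ∃ u v : V, p = s(u, v) ∧ ∃ x y : V, e = s(x, y) ∧ ContainsEdge (OP u v) x y}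


instance {V : Type*} [DecidableEq V] (P : List V) (x y : V) :
    Decidable (ContainsEdge P x y) := by
  unfold ContainsEdge; infer_instance

theorem split_unique {α : Type*} {a : α} :
    ∀ {l₁ l₃ l₂ l₄ : List α}, a ∉ l₁ → a ∉ l₃ →
      l₁ ++ a :: l₂ = l₃ ++ a :: l₄ → l₁ = l₃ ∧ l₂ = l₄ := by
  intro l₁
  induction l₁ with
  | nil =>
    intro l₃ l₂ l₄ h1 h3 h
    cases l₃ with
    | nil => simpa using h
    | cons c t =>
      simp only [List.nil_append, List.cons_append] at h
      injection h with ha hb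
      simp [ha] at h3
  | cons x t ih =>
    intro l₃ l₂ l₄ h1 h3 h
    cases l₃ with
    | nil =>
      simp only [List.cons_append, List.nil_append] at h
      injection h with ha hb
      simp [ha] at h1
    | cons c t₃ =>
      simp only [List.cons_append] at h
      injection h with ha hb
      obtain ⟨h1', h2'⟩ := ih (fun hm => h1 (List.mem_cons_of_mem _ hm))
        (fun hm => h3 (List.mem_cons_of_mem _ hm)) hb
      exact ⟨by rw [ha, h1'], h2'⟩

theorem containsEdge'_split {V : Type*} {L R : List V} {v u : V}
    (hnd : (L ++ v :: R).Nodup) :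
    ContainsEdge (L ++ v :: R) v u ↔ (∃ R', R = u :: R') ∨ (∃ L', L = L' ++ [u]) := by
  have hds := List.nodup_append'.mp hnd
  have hvL : v ∉ L := fun h => hds.2.2 h List.mem_cons_self
  have hvR : v ∉ R := (List.nodup_cons.mp hds.2.1).1
  constructor
  · rintro (⟨s, t, hst⟩ | ⟨s, t, hst⟩)
    · have E : s ++ v :: (u :: t) = L ++ v :: R := by simpa using hst
      have hnd' : (s ++ v :: (u :: t)).Nodup := by rw [E]; exact hnd
      have hvs : v ∉ s := fun h =>
        (List.nodup_append'.mp hnd').2.2 h List.mem_cons_self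
      obtain ⟨-, h2⟩ := split_unique hvs hvL E
      exact Or.inl ⟨t, h2.symm⟩
    · have E : (s ++ [u]) ++ v :: t = L ++ v :: R := by simpa using hst
      have hnd' : ((s ++ [u]) ++ v :: t).Nodup := by rw [E]; exact hnd
      have hvs : v ∉ s ++ [u] := fun h =>
        (List.nodup_append'.mp hnd').2.2 h List.mem_cons_self
      obtain ⟨h1, -⟩ := split_unique hvs hvL E
      exact Or.inr ⟨s, h1.symm⟩
  · rintro (⟨R', rfl⟩ | ⟨L', rfl⟩)
    · exact Or.inl ⟨L, R', by simp⟩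
    · exact Or.inr ⟨L', R, by simp⟩

theorem head?_mem_left {α : Type*} {X Z : List α} {w : α} (hX : X ≠ [])
    (h : (X ++ Z).head? = some w) : w ∈ X := by
  cases X with
  | nil => simp at hX
  | cons c t =>
    simp only [List.cons_append, List.head?_cons, Option.some.injEq] at h
    simp [← h]

theorem getLast?_mem_right {α : Type*} {X Z : List α} {w : α} (hZ : Z ≠ [])
    (h : (X ++ Z).getLast? = some w) : w ∈ Z := by
  rw [List.getLast?_append_of_ne_nil _ hZ] at h
  exact List.mem_of_mem_getLast? h

theorem count_neighbors {V : Type*} [Fintype V] [DecidableEq V] (P : List V) (a b v : V)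
    (hnd : P.Nodup) (hhead : P.head? = some a)
    (hlast : P.getLast? = some b) (hmemv : v ∈ P) (hlen : 2 ≤ P.length) :
    ((Finset.univ.erase v).filter (fun u => ContainsEdge P v u)).card
      = if v = a ∨ v = b then 1 else 2 := by
  obtain ⟨L, R, rfl⟩ := List.append_of_mem hmemv
  have hds := List.nodup_append'.mp hnd
  have hvL : v ∉ L := fun h => hds.2.2 h List.mem_cons_self
  have hvR : v ∉ R := (List.nodup_cons.mp hds.2.1).1
  rcases List.eq_nil_or_concat L with rfl | ⟨M, l, hL⟩
  on_goal 2 => rw [List.concat_eq_append] at hL; subst hL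
  · cases R with
    | nil => simp at hlen
    | cons r R' =>
      have hva : v = a := by simpa using hhead
      have hrv : r ≠ v := fun h => hvR (h ▸ List.mem_cons_self)
      have hfil : ((Finset.univ.erase v).filter
          (fun u => ContainsEdge ([] ++ v :: r :: R') v u)) = {r} := by
        ext u
        simp only [Finset.mem_filter, Finset.mem_erase, Finset.mem_univ, true_and, and_true,
          Finset.mem_singleton]
        rw [containsEdge'_split hnd]
        constructor
        · rintro ⟨hu, (⟨R'', hR⟩ | ⟨L', hL⟩)⟩
          · injection hR with h1 h2; exact h1.symm
          · exact absurd hL.symm (by simp)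
        · rintro rfl; exact ⟨hrv, Or.inl ⟨R', rfl⟩⟩
      rw [hfil, Finset.card_singleton, if_pos (Or.inl hva)]
  · cases R with
    | nil =>
      have hvb : v = b := by
        rw [show (M ++ [l]) ++ v :: [] = (M ++ [l]) ++ [v] by simp,
          List.getLast?_concat] at hlast
        exact Option.some_inj.mp hlast
      have hlv : l ≠ v := fun h => hvL (h ▸ List.mem_append_right M (by simp))
      have hfil : ((Finset.univ.erase v).filter
          (fun u => ContainsEdge ((M ++ [l]) ++ v :: []) v u)) = {l} := by
        ext u
        simp only [Finset.mem_filter, Finset.mem_erase, Finset.mem_univ, true_and, and_true,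
          Finset.mem_singleton]
        rw [containsEdge'_split hnd]
        constructor
        · rintro ⟨hu, (⟨R'', hR⟩ | ⟨L', hL⟩)⟩
          · exact absurd hR (by simp)
          · have h := congrArg List.getLast? hL
            simp only [List.getLast?_concat] at h
            injection h with h'; exact h'.symm
        · rintro rfl; exact ⟨hlv, Or.inr ⟨M, rfl⟩⟩
      rw [hfil, Finset.card_singleton, if_pos (Or.inr hvb)]
    | cons r R' =>
      have hva : v ≠ a := fun h => hvL (h ▸ head?_mem_left (by simp) hhead)
      have hvb : v ≠ b := by
        intro h
        rw [show (M ++ [l]) ++ v :: r :: R' = ((M ++ [l]) ++ [v]) ++ r :: R' by simp] at hlast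
        exact hvR (h ▸ getLast?_mem_right (by simp) hlast)
      have hlv : l ≠ v := fun h => hvL (h ▸ List.mem_append_right M (by simp))
      have hrv : r ≠ v := fun h => hvR (h ▸ List.mem_cons_self)
      have hlr : l ≠ r := by
        intro h
        subst h
        exact hds.2.2 (show l ∈ M ++ [l] by simp) (show l ∈ v :: l :: R' by simp)
      have hfil : ((Finset.univ.erase v).filter
          (fun u => ContainsEdge ((M ++ [l]) ++ v :: r :: R') v u)) = {l, r} := by
        ext u
        simp only [Finset.mem_filter, Finset.mem_erase, Finset.mem_univ, true_and, and_true,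
          Finset.mem_insert, Finset.mem_singleton]
        rw [containsEdge'_split hnd]
        constructor
        · rintro ⟨hu, (⟨R'', hR⟩ | ⟨L', hL⟩)⟩
          · injection hR with h1 h2; exact Or.inr h1.symm
          · have h := congrArg List.getLast? hL
            simp only [List.getLast?_concat] at h
            injection h with h'; exact Or.inl h'.symm
        · rintro (rfl | rfl)
          · exact ⟨hlv, Or.inr ⟨M, rfl⟩⟩
          · exact ⟨hrv, Or.inl ⟨R', rfl⟩⟩
      rw [hfil, Finset.card_pair hlr, if_neg (by tauto)]

theorem containsEdge_reverse {V : Type*} (P : List V) (x y : V) :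
    ContainsEdge P.reverse x y ↔ ContainsEdge P x y := by
  have h : ∀ (Q : List V) (a b : V), [a, b] <:+: Q.reverse ↔ [b, a] <:+: Q := by
    intro Q a b
    simpa using (List.reverse_infix (l₁ := [b, a]) (l₂ := Q))
  unfold ContainsEdge
  rw [h, h]
  exact or_comm



/-- For every vertex `v`, the frequencies of the `i - 1` edges
incident to `v` sum to `(i - 1)²`; in particular their average is `i - 1`. -/
theorem stmt2 {V : Type*} [Fintype V] [DecidableEq V] (i : ℕ) (hi : 4 ≤ i)
    (hcard : Fintype.card V = i)
    (d : V → V → ℝ) (hdsymm : ∀ u v : V, d u v = d v u)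
    (hdpos : ∀ u v : V, u ≠ v → 0 < d u v)
    (OP : V → V → List V)
    (hOP : ∀ u v : V, u ≠ v → IsHamPath (OP u v) u v)
    (hOPmin : ∀ u v : V, u ≠ v → ∀ Q : List V, IsHamPath Q u v →
      pathLen d (OP u v) ≤ pathLen d Q)
    (hOPuniq : ∀ u v : V, u ≠ v → ∀ Q : List V, IsHamPath Q u v →
      pathLen d Q = pathLen d (OP u v) → Q = OP u v)
    (hOPsymm : ∀ u v : V, OP v u = (OP u v).reverse) :
    ∀ v : V,
      (∑ u ∈ Finset.univ.erase v, freq OP s(v, u)) = (i - 1) ^ 2 ∧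
      (∑ u ∈ Finset.univ.erase v, (freq OP s(v, u) : ℚ)) / ((i : ℚ) - 1)
        = (i : ℚ) - 1 := by
    classical
  intro v
  have hj3 : 3 ≤ i - 1 := by omega
  -- every optimal path has length i
  have hham_len : ∀ a b : V, a ≠ b → (OP a b).length = i := by
    intro a b hab
    obtain ⟨hnd, hmem, -, -⟩ := hOP a b hab
    have h1 : (OP a b).toFinset = Finset.univ := by
      ext x; simp [hmem x]
    calc (OP a b).length = (OP a b).toFinset.card :=
          (List.toFinset_card_of_nodup hnd).symm
      _ = Fintype.card V := by rw [h1, Finset.card_univ]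
      _ = i := hcard
  set S : Finset (Sym2 V) := Finset.univ.filter (fun p => ¬ p.IsDiag) with hS
  -- Step 1: express freq as a finset card
  have hfreq : ∀ u : V, u ≠ v → freq OP s(v, u)
      = (S.filter (fun p => ∃ a b : V, p = s(a, b) ∧ ContainsEdge (OP a b) v u)).card := by
    intro u hu
    unfold freq
    rw [Nat.card_eq_fintype_card, Fintype.card_subtype]
    rw [hS, Finset.filter_filter]
    refine congrArg Finset.card (Finset.filter_congr fun p _ => ?_)
    constructor
    · rintro ⟨hd, a, b, rfl, x, y, hxy, hc⟩
      refine ⟨hd, a, b, rfl, ?_⟩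
      rcases Sym2.eq_iff.mp hxy with ⟨h1, h2⟩ | ⟨h1, h2⟩
      · rw [← h1, ← h2] at hc; exact hc
      · rw [← h1, ← h2] at hc; exact or_comm.mp hc
    · rintro ⟨hd, a, b, rfl, hc⟩
      exact ⟨hd, a, b, rfl, v, u, rfl, hc⟩
  -- Step 2: per-pair count of incident edges
  have hpair : ∀ p ∈ S, ((Finset.univ.erase v).filter
      (fun u => ∃ a b : V, p = s(a, b) ∧ ContainsEdge (OP a b) v u)).card
      = if v ∈ p then 1 else 2 := by
    intro p hp
    induction p using Sym2.ind with
    | _ a b =>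
      have hab : a ≠ b := by
        simpa [hS, Sym2.mk_isDiag_iff] using hp
      have hiff : ∀ u : V,
          (∃ a' b' : V, s(a, b) = s(a', b') ∧ ContainsEdge (OP a' b') v u)
          ↔ ContainsEdge (OP a b) v u := by
        intro u
        constructor
        · rintro ⟨a', b', hab', hc⟩
          rcases Sym2.eq_iff.mp hab' with ⟨h1, h2⟩ | ⟨h1, h2⟩
          · rw [← h1, ← h2] at hc; exact hc
          · rw [← h1, ← h2] at hc
            rw [hOPsymm a b] at hc
            exact (containsEdge_reverse _ _ _).mp hc
        · intro hc; exact ⟨a, b, rfl, hc⟩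
      rw [Finset.filter_congr (fun u _ => hiff u)]
      obtain ⟨hnd, hmem, hh, hl⟩ := hOP a b hab
      rw [count_neighbors (OP a b) a b v hnd hh hl (hmem v)
        (by rw [hham_len a b hab]; omega)]
      simp [Sym2.mem_iff]
  -- Step 3: double counting
  have hsum : (∑ u ∈ Finset.univ.erase v, freq OP s(v, u))
      = ∑ p ∈ S, (if v ∈ p then 1 else 2) := by
    calc ∑ u ∈ Finset.univ.erase v, freq OP s(v, u)
        = ∑ u ∈ Finset.univ.erase v, (S.filter
            (fun p => ∃ a b : V, p = s(a, b) ∧ ContainsEdge (OP a b) v u)).card :=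
          Finset.sum_congr rfl (fun u hu => hfreq u (Finset.ne_of_mem_erase hu))
      _ = ∑ u ∈ Finset.univ.erase v, ∑ p ∈ S,
            (if (∃ a b : V, p = s(a, b) ∧ ContainsEdge (OP a b) v u) then 1 else 0) :=
          Finset.sum_congr rfl (fun u _ => Finset.card_filter _ _)
      _ = ∑ p ∈ S, ∑ u ∈ Finset.univ.erase v,
            (if (∃ a b : V, p = s(a, b) ∧ ContainsEdge (OP a b) v u) then 1 else 0) :=
          Finset.sum_comm
      _ = ∑ p ∈ S, (if v ∈ p then 1 else 2) := by
          refine Finset.sum_congr rfl (fun p hp => ?_)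
          rw [← hpair p hp, Finset.card_filter]
  -- cardinalities
  have hScard : S.card = i.choose 2 := by
    have h := Sym2.card_subtype_not_diag (α := V)
    rw [Fintype.card_subtype, hcard] at h
    rw [hS]; exact h
  have hIncard : (S.filter (fun p => v ∈ p)).card = i - 1 := by
    have himg : S.filter (fun p => v ∈ p)
        = (Finset.univ.erase v).image (fun u => s(v, u)) := by
      ext p
      induction p using Sym2.ind with
      | _ a b =>
        simp only [hS, Finset.mem_filter, Finset.mem_univ, true_and, and_true,
          Finset.mem_image, Finset.mem_erase, Sym2.mk_isDiag_iff, Sym2.mem_iff]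
        constructor
        · rintro ⟨hab, (rfl | rfl)⟩
          · exact ⟨b, fun h => hab h.symm, rfl⟩
          · exact ⟨a, fun h => hab h, Sym2.eq_swap⟩
        · rintro ⟨u, hu, heq⟩
          rcases Sym2.eq_iff.mp heq with ⟨h1, h2⟩ | ⟨h1, h2⟩
          · exact ⟨by rw [← h1, ← h2]; exact fun h => hu h.symm, Or.inl h1⟩
          · exact ⟨by rw [← h1, ← h2]; exact fun h => hu h, Or.inr h1⟩
    rw [himg, Finset.card_image_of_injOn, Finset.card_erase_of_mem (Finset.mem_univ v),
      Finset.card_univ, hcard]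
    intro u1 h1 u2 h2 h
    rcases Sym2.eq_iff.mp h with ⟨-, h'⟩ | ⟨h1', h2'⟩
    · exact h'
    · exact absurd h2' (Finset.ne_of_mem_erase h1)
  have hsplit : (S.filter (fun p => v ∈ p)).card
      + (S.filter (fun p => ¬ v ∈ p)).card = S.card :=
    Finset.card_filter_add_card_filter_not _
  have hchoose : 2 * i.choose 2 = i * (i - 1) := by
    rw [Nat.choose_two_right]
    have heven : Even (i * (i - 1)) := by
      have h := Nat.even_mul_succ_self (i - 1)
      have hii : (i - 1) * (i - 1 + 1) = i * (i - 1) := by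
        rw [show i - 1 + 1 = i by omega]; ring
      rwa [hii] at h
    obtain ⟨k, hk⟩ := heven
    omega
  have hc2 : 2 * S.card = i * (i - 1) := by rw [hScard]; exact hchoose
  have hout : (S.filter (fun p => ¬ v ∈ p)).card = S.card - (i - 1) := by
    rw [← hsplit, hIncard]; omega
  have htot : (∑ p ∈ S, (if v ∈ p then 1 else 2))
      = (i - 1) + (S.card - (i - 1)) * 2 := by
    rw [Finset.sum_ite, Finset.sum_const, Finset.sum_const, smul_eq_mul, smul_eq_mul,
      mul_one, hIncard, hout]
  have hmain : (∑ u ∈ Finset.univ.erase v, freq OP s(v, u)) = (i - 1) ^ 2 := by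
    obtain ⟨t, ht⟩ : ∃ t, (i - 1) * (i - 1) = t := ⟨_, rfl⟩
    have h1 : i * (i - 1) = t + (i - 1) := by
      rw [show i = i - 1 + 1 from by omega]
      rw [show i - 1 + 1 - 1 = i - 1 from by omega, add_mul, one_mul, ht]
    have h2 : i - 1 ≤ t := by rw [← ht]; exact Nat.le_mul_of_pos_left _ (by omega)
    rw [hsum, htot, pow_two, ht]
    omega
  refine ⟨hmain, ?_⟩
  have hcast : (∑ u ∈ Finset.univ.erase v, (freq OP s(v, u) : ℚ))
      = ((i : ℚ) - 1) ^ 2 := by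
    rw [← Nat.cast_sum, hmain]
    push_cast [Nat.cast_sub (by omega : 1 ≤ i)]
    ring
  rw [hcast]
  have hne : (i : ℚ) - 1 ≠ 0 := by
    have : (4 : ℚ) ≤ (i : ℚ) := by exact_mod_cast hi
    nlinarith
  field_simp
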